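/- (Proposition 'monotone'.) Let ρ, σ be density matrices on a finite-dimensional complex Hilbert space N and let T be a quantum operation from operators on N to operators on a finite-dimensional complex Hilbert space M. Then D(T(ρ), T(σ)) ≤ D(ρ, σ). -/

import Mathlib

open scoped ComplexOrder

noncomputable section

/-- The state space of `n` qubits: linear operators on `(ℂ²)^{⊗ n}`,
represented as matrices indexed by `Fin n → Fin 2`. -/
abbrev QState (n : ℕ) := Matrix (Fin n → Fin 2) (Fin n → Fin 2) ℂ

/-- A density matrix: Hermitian (implied), positive semidefinite, trace one. -/
def IsDensityMatrix {α : Type*} [Fintype α] (ρ : Matrix α α ℂ) : Prop :=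
  ρ.PosSemidef ∧ ρ.trace = 1

/-- The trace norm of a matrix: `tr √(Aᴴ A)`, the sum of the singular values. -/
noncomputable def traceNorm {α : Type*} [Fintype α] [DecidableEq α] (A : Matrix α α ℂ) : ℝ :=
  ((Matrix.posSemidef_conjTranspose_mul_self A).1.eigenvectorUnitary.1 *
    Matrix.diagonal (((↑) : ℝ → ℂ) ∘ (Real.sqrt ∘ (Matrix.posSemidef_conjTranspose_mul_self A).1.eigenvalues)) *
    (star (Matrix.posSemidef_conjTranspose_mul_self A).1.eigenvectorUnitary : Matrix α α ℂ)).trace.re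

/-- The trace distance `D(ρ,σ) = ‖ρ - σ‖_tr / 2`. -/
noncomputable def traceDist {α : Type*} [Fintype α] [DecidableEq α] (ρ σ : Matrix α α ℂ) : ℝ :=
  traceNorm (ρ - σ) / 2

/-- The extension `T ⊗ id_γ` of a linear map on matrices, acting blockwise. -/
def tensorIdMap {α β γ : Type*} (T : Matrix α α ℂ →ₗ[ℂ] Matrix β β ℂ)
    (M : Matrix (α × γ) (α × γ) ℂ) : Matrix (β × γ) (β × γ) ℂ :=
  Matrix.of fun p q => T (Matrix.of fun a a' => M (a, p.2) (a', q.2)) p.1 q.1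

/-- Complete positivity: all the extensions `T ⊗ id_m` preserve positive semidefiniteness. -/
def IsCompletelyPositive {α β : Type*} [Fintype α] [Fintype β]
    (T : Matrix α α ℂ →ₗ[ℂ] Matrix β β ℂ) : Prop :=
  ∀ (m : ℕ) (M : Matrix (α × Fin m) (α × Fin m) ℂ),
    M.PosSemidef → (tensorIdMap T M).PosSemidef

/-- A quantum operation: a trace-preserving, completely positive linear map. -/
def IsQuantumOp {α β : Type*} [Fintype α] [Fintype β]
    (T : Matrix α α ℂ →ₗ[ℂ] Matrix β β ℂ) : Prop :=
  (∀ M, (T M).trace = M.trace) ∧ IsCompletelyPositive T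

/-- The depolarizing channel at rate `η` on `d × d` matrices:
`ρ ↦ (1-η) ρ + (η tr ρ / dim) I`. -/
noncomputable def depolarize (η : ℝ) (d : Type*) [Fintype d] [DecidableEq d] :
    Matrix d d ℂ →ₗ[ℂ] Matrix d d ℂ :=
  (1 - η : ℂ) • LinearMap.id +
    (Matrix.traceLinearMap d ℂ ℂ).smulRight (((η : ℂ) / (Fintype.card d : ℂ)) • (1 : Matrix d d ℂ))

/-- Depolarization at rate `η` of the single qubit `i` of an `n`-qubit system. -/
noncomputable def depolarizeAt (η : ℝ) {n : ℕ} (i : Fin n) : QState n →ₗ[ℂ] QState n where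
  toFun ρ := Matrix.of fun x y =>
    (1 - η : ℂ) * ρ x y +
      (η : ℂ) * (if x i = y i then
        (2 : ℂ)⁻¹ * ∑ b : Fin 2, ρ (Function.update x i b) (Function.update y i b) else 0)
  map_add' ρ σ := by
    ext x y
    simp only [Matrix.of_apply, Matrix.add_apply]
    split
    · rw [Finset.sum_add_distrib]; ring
    · ring
  map_smul' c ρ := by
    ext x y
    simp only [Matrix.of_apply, Matrix.smul_apply, smul_eq_mul, RingHom.id_apply]
    split
    · rw [← Finset.mul_sum]; ring
    · ring

/-- `E_η^{⊗n}`: independent depolarization at rate `η` of each of the `n` qubits. -/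
noncomputable def depolarizeN (η : ℝ) (n : ℕ) : QState n →ₗ[ℂ] QState n :=
  (List.finRange n).foldr (fun i acc => depolarizeAt η i ∘ₗ acc) LinearMap.id

/-- `glue A x z` is the bit string on `n` qubits equal to `x` on `A` and `z` outside `A`. -/
def glue {n : ℕ} (A : Finset (Fin n)) (x : A → Fin 2) (z : {i : Fin n // i ∉ A} → Fin 2) :
    Fin n → Fin 2 :=
  fun i => if h : i ∈ A then x ⟨i, h⟩ else z ⟨i, h⟩

/-- `ptr A ρ = ρ|_A`: the partial trace of an `n`-qubit state over all the qubits outside `A`. -/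
noncomputable def ptr {n : ℕ} (A : Finset (Fin n)) (ρ : QState n) :
    Matrix (A → Fin 2) (A → Fin 2) ℂ :=
  Matrix.of fun x y => ∑ z : ({i : Fin n // i ∉ A} → Fin 2), ρ (glue A x z) (glue A y z)

/-- Given a partition of the qubits `[N]` into the fibers of `f : Fin N → Fin w` and matrices
`M ν` on the blocks, `assemble f M` is the tensor product matrix `⊗_ν M ν` on all `N` qubits. -/
def assemble {N w : ℕ} (f : Fin N → Fin w)
    (M : ∀ ν : Fin w,
      Matrix ({i : Fin N // f i = ν} → Fin 2) ({i : Fin N // f i = ν} → Fin 2) ℂ) :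
    QState N :=
  Matrix.of fun x y => ∏ ν : Fin w, M ν (fun j => x j.1) (fun j => y j.1)

/-- `T` decomposes as the tensor product `⊗_ν Tb ν` of quantum gates of fan-in `≤ k`, with
respect to the partitions of the input qubits `[N]` into the fibers `K_ν` of `f` and of the
output qubits `[N']` into the fibers `L_ν` of `g`. -/
def IsGateDecomp {N N' w : ℕ} (k : ℕ) (T : QState N →ₗ[ℂ] QState N')
    (f : Fin N → Fin w) (g : Fin N' → Fin w)
    (Tb : ∀ ν : Fin w,
      Matrix ({i : Fin N // f i = ν} → Fin 2) ({i : Fin N // f i = ν} → Fin 2) ℂ →ₗ[ℂ]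
        Matrix ({i : Fin N' // g i = ν} → Fin 2) ({i : Fin N' // g i = ν} → Fin 2) ℂ) : Prop :=
  (∀ ν, IsQuantumOp (Tb ν)) ∧
  (∀ ν : Fin w, Fintype.card {i : Fin N // f i = ν} ≤ k) ∧
  (∀ M, T (assemble f M) = assemble g fun ν => Tb ν (M ν))

/-- A quantum circuit over the gate set `G_k` of all quantum gates of fan-in `≤ k`:
a sequence of `depth` levels, with `nq i` qubits at level `i`, where each level operation
decomposes as a tensor product of quantum gates of fan-in `≤ k`. -/
structure QCircuit (k : ℕ) where
  depth : ℕ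
  nq : Fin (depth + 1) → ℕ
  op : ∀ i : Fin depth, QState (nq i.castSucc) →ₗ[ℂ] QState (nq i.succ)
  isGate : ∀ i : Fin depth, ∃ (w : ℕ) (f : Fin (nq i.castSucc) → Fin w)
    (g : Fin (nq i.succ) → Fin w)
    (Tb : ∀ ν : Fin w,
      Matrix ({j : Fin (nq i.castSucc) // f j = ν} → Fin 2)
          ({j : Fin (nq i.castSucc) // f j = ν} → Fin 2) ℂ →ₗ[ℂ]
        Matrix ({j : Fin (nq i.succ) // g j = ν} → Fin 2)
          ({j : Fin (nq i.succ) // g j = ν} → Fin 2) ℂ),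
    IsGateDecomp k (op i) f g Tb

/-- The width of a circuit: the maximum number of qubits at any level. -/
def QCircuit.width {k : ℕ} (Q : QCircuit k) : ℕ := Finset.univ.sup Q.nq

/-- The first `i` levels of the perturbed circuit `Q_η`: the gates `T_0, …, T_{i-1}` interlaced
with depolarizing noise at rate `η` on every qubit between consecutive gates. -/
noncomputable def QCircuit.runP {k : ℕ} (Q : QCircuit k) (η : ℝ) :
    (i : ℕ) → (h : i ≤ Q.depth) →
      (QState (Q.nq ⟨0, Nat.succ_pos _⟩) →ₗ[ℂ] QState (Q.nq ⟨i, Nat.lt_succ_of_le h⟩))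
  | 0, _ => LinearMap.id
  | (i + 1), h =>
      Q.op ⟨i, h⟩ ∘ₗ
        (if i = 0 then LinearMap.id
          else depolarizeN η (Q.nq ⟨i, Nat.lt_succ_of_le (Nat.le_of_succ_le h)⟩)) ∘ₗ
        Q.runP η i (Nat.le_of_succ_le h)

/-- The perturbed circuit `Q_η = T_{t-1} ∘ E_η^{⊗n_{t-1}} ∘ ⋯ ∘ E_η^{⊗n_1} ∘ T_0`. -/
noncomputable def QCircuit.perturbed {k : ℕ} (Q : QCircuit k) (η : ℝ) :
    QState (Q.nq ⟨0, Nat.succ_pos _⟩) →ₗ[ℂ] QState (Q.nq (Fin.last Q.depth)) :=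
  Q.runP η Q.depth le_rfl

end

noncomputable section
namespace TDAux
open Matrix

variable {α : Type*} [Fintype α] [DecidableEq α]

def sfun {A : Matrix α α ℂ} (hA : A.IsHermitian) (f : ℝ → ℝ) : Matrix α α ℂ :=
  (hA.eigenvectorUnitary : Matrix α α ℂ) *
    Matrix.diagonal (fun i => (f (hA.eigenvalues i) : ℂ)) *
    (star (hA.eigenvectorUnitary : Matrix α α ℂ))

variable {A : Matrix α α ℂ} (hA : A.IsHermitian) (f g : ℝ → ℝ)

lemma sfun_mul : sfun hA f * sfun hA g = sfun hA (f * g) := by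
  have h1 : (star (hA.eigenvectorUnitary : Matrix α α ℂ)) *
      (hA.eigenvectorUnitary : Matrix α α ℂ) = 1 := by
    simpa using unitary.coe_star_mul_self hA.eigenvectorUnitary
  simp only [sfun, Matrix.mul_assoc]
  rw [← Matrix.mul_assoc (star _) _ _, h1, Matrix.one_mul,
    ← Matrix.mul_assoc (Matrix.diagonal _), Matrix.diagonal_mul_diagonal]
  simp [Complex.ofReal_mul, mul_comm]

lemma sfun_add : sfun hA f + sfun hA g = sfun hA (f + g) := by
  simp only [sfun]
  rw [← Matrix.add_mul, ← Matrix.mul_add, Matrix.diagonal_add]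
  simp [Complex.ofReal_add]

lemma sfun_neg : sfun hA (-f) = -sfun hA f := by
  simp only [sfun]
  rw [← Matrix.neg_mul, ← Matrix.mul_neg, Matrix.diagonal_neg]
  simp

lemma sfun_sub : sfun hA f - sfun hA g = sfun hA (f - g) := by
  rw [sub_eq_add_neg, ← sfun_neg, sfun_add, sub_eq_add_neg]

lemma sfun_one : sfun hA (fun _ => 1) = 1 := by
  have h1 : (hA.eigenvectorUnitary : Matrix α α ℂ) *
      (star (hA.eigenvectorUnitary : Matrix α α ℂ)) = 1 := by
    simpa using unitary.coe_mul_star_self hA.eigenvectorUnitary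
  simp only [sfun, Complex.ofReal_one, Matrix.diagonal_one, Matrix.mul_one, h1]

lemma sfun_id : sfun hA id = A := by
  simpa [sfun, Function.comp_def] using hA.spectral_theorem.symm

lemma sfun_posSemidef (hf : ∀ x, 0 ≤ f x) : (sfun hA f).PosSemidef := by
  have hd : (Matrix.diagonal (fun i => (f (hA.eigenvalues i) : ℂ))).PosSemidef :=
    Matrix.posSemidef_diagonal_iff.mpr fun i => by
      exact_mod_cast Complex.zero_le_real.mpr (hf _)
  simpa [sfun, Matrix.star_eq_conjTranspose] using
    hd.mul_mul_conjTranspose_same (hA.eigenvectorUnitary : Matrix α α ℂ)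

lemma sfun_trace : (sfun hA f).trace = ∑ i, (f (hA.eigenvalues i) : ℂ) := by
  have h1 : (star (hA.eigenvectorUnitary : Matrix α α ℂ)) *
      (hA.eigenvectorUnitary : Matrix α α ℂ) = 1 := by
    simpa using unitary.coe_star_mul_self hA.eigenvectorUnitary
  rw [sfun, Matrix.trace_mul_cycle, h1, Matrix.one_mul, Matrix.trace_diagonal]

lemma trace_nonneg {M : Matrix α α ℂ} (hM : M.PosSemidef) : 0 ≤ M.trace := by
  rw [Matrix.trace]
  refine Finset.sum_nonneg fun i _ => ?_
  have := hM.dotProduct_mulVec_nonneg (Pi.single i 1)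
  simpa [dotProduct, Matrix.mulVec_single, Pi.single_apply, Matrix.diag] using this

lemma trace_mul_nonneg {P Q : Matrix α α ℂ} (hP : P.PosSemidef) (hQ : Q.PosSemidef) :
    0 ≤ (P * Q).trace := by
  obtain ⟨S, hSh, hSS⟩ : ∃ S : Matrix α α ℂ, S.IsHermitian ∧ S * S = P := by
    refine ⟨cfc Real.sqrt P, (cfc_predicate Real.sqrt P : IsSelfAdjoint _), ?_⟩
    rw [← cfc_mul Real.sqrt Real.sqrt P]
    conv_rhs => rw [← cfc_id' ℝ P (ha := hP.1)]
    refine cfc_congr fun x hx => ?_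
    rw [hP.1.spectrum_real_eq_range_eigenvalues] at hx
    obtain ⟨i, rfl⟩ := hx
    exact Real.mul_self_sqrt (hP.eigenvalues_nonneg i)
  have hs : (S * Q * Sᴴ).PosSemidef := hQ.mul_mul_conjTranspose_same S
  have he : (P * Q).trace = (S * Q * Sᴴ).trace := by
    rw [hSh.eq, Matrix.trace_mul_cycle, hSS]
  exact he ▸ trace_nonneg hs

lemma max_add_max_neg (x : ℝ) : max x 0 + max (-x) 0 = |x| := by
  rcases le_total 0 x with h | h
  · rw [max_eq_left h, max_eq_right (neg_nonpos.mpr h), abs_of_nonneg h, add_zero]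
  · rw [max_eq_right h, max_eq_left (neg_nonneg.mpr h), abs_of_nonpos h, zero_add]

lemma traceNorm_herm : traceNorm A =
    ((sfun hA fun x => max x 0).trace + (sfun hA fun x => max (-x) 0).trace).re := by
  have habs : (sfun hA fun x => |x|).PosSemidef := sfun_posSemidef hA _ fun x => abs_nonneg x
  have hsq : (sfun hA fun x => |x|) ^ 2 = Aᴴ * A := by
    rw [pow_two, sfun_mul,
      show ((fun x : ℝ => |x|) * fun x => |x|) = (id * id : ℝ → ℝ) from
        funext fun x => by simp [abs_mul_abs_self],
      ← sfun_mul, sfun_id, hA.eq]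
  have huniq : (Matrix.posSemidef_conjTranspose_mul_self A).1.eigenvectorUnitary.1 *
      Matrix.diagonal (((↑) : ℝ → ℂ) ∘ (Real.sqrt ∘
        (Matrix.posSemidef_conjTranspose_mul_self A).1.eigenvalues)) *
      (star (Matrix.posSemidef_conjTranspose_mul_self A).1.eigenvectorUnitary : Matrix α α ℂ) =
      sfun hA fun x => |x| := by
    have hm : cfc (fun x : ℝ => x * x) A = A * A := by
      rw [cfc_mul (fun x : ℝ => x) (fun x => x) A, cfc_id' ℝ A]
    calc _ = cfc Real.sqrt (Aᴴ * A) := by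
          rw [(Matrix.posSemidef_conjTranspose_mul_self A).1.cfc_eq]
          simp [Matrix.IsHermitian.cfc, Function.comp_def]
      _ = cfc Real.sqrt (cfc (fun x : ℝ => x * x) A) := by rw [hm, hA.eq]
      _ = cfc (fun x : ℝ => |x|) A := by
          rw [← cfc_comp Real.sqrt (fun x : ℝ => x * x) A]
          congr 1
          funext x
          simp [Real.sqrt_mul_self_eq_abs]
      _ = sfun hA fun x => |x| := by
          rw [hA.cfc_eq]
          simp [Matrix.IsHermitian.cfc, Function.comp_def, sfun]
  rw [traceNorm, huniq, ← Matrix.trace_add, sfun_add,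
    show ((fun x : ℝ => max x 0) + fun x => max (-x) 0) = (fun x : ℝ => |x|) from
      funext fun x => max_add_max_neg x]

lemma traceNorm_le {B X Y : Matrix α α ℂ} (hX : X.PosSemidef) (hY : Y.PosSemidef)
    (hBXY : B = X - Y) : traceNorm B ≤ X.trace.re + Y.trace.re := by
  have hB : B.IsHermitian := hBXY ▸ hX.isHermitian.sub hY.isHermitian
  have hcompl : ∀ h : ℝ → ℝ, (1 : Matrix α α ℂ) - sfun hB h = sfun hB (fun x => 1 - h x) := by
    intro h
    have h2 := sfun_sub hB (fun _ => 1) h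
    rw [sfun_one] at h2
    exact h2
  have key : ∀ (h : ℝ → ℝ), (∀ x, 0 ≤ h x) → (∀ x, h x ≤ 1) → ∀ {Z : Matrix α α ℂ},
      Z.PosSemidef → 0 ≤ (sfun hB h * Z).trace ∧ (sfun hB h * Z).trace ≤ Z.trace := by
    intro h h0 h1 Z hZ
    have hpsd := sfun_posSemidef hB h h0
    have hpsd' : ((1 : Matrix α α ℂ) - sfun hB h).PosSemidef := by
      rw [hcompl h]
      exact sfun_posSemidef hB _ fun x => by linarith [h1 x]
    refine ⟨trace_mul_nonneg hpsd hZ, ?_⟩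
    have h3 := trace_mul_nonneg hpsd' hZ
    rw [Matrix.sub_mul, Matrix.one_mul, Matrix.trace_sub, sub_nonneg] at h3
    exact h3
  set ind : ℝ → ℝ := fun x => if 0 < x then 1 else 0 with hind
  set ind' : ℝ → ℝ := fun x => if x < 0 then 1 else 0 with hind'
  have hind0 : ∀ x, 0 ≤ ind x := fun x => by simp only [hind]; split <;> norm_num
  have hind1 : ∀ x, ind x ≤ 1 := fun x => by simp only [hind]; split <;> norm_num
  have hind'0 : ∀ x, 0 ≤ ind' x := fun x => by simp only [hind']; split <;> norm_num
  have hind'1 : ∀ x, ind' x ≤ 1 := fun x => by simp only [hind']; split <;> norm_num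
  have hPos : sfun hB ind * B = sfun hB (fun x => max x 0) := by
    rw [show sfun hB ind * B = sfun hB ind * sfun hB id from by rw [sfun_id], sfun_mul,
      show (ind * id : ℝ → ℝ) = fun x => max x 0 from funext fun x => ?_]
    simp only [Pi.mul_apply, hind, id]
    rcases lt_or_ge 0 x with h | h
    · rw [if_pos h, one_mul, max_eq_left h.le]
    · rw [if_neg (not_lt.mpr h), zero_mul, max_eq_right h]
  have hNeg : sfun hB ind' * B = -sfun hB (fun x => max (-x) 0) := by
    rw [← sfun_neg,
      show sfun hB ind' * B = sfun hB ind' * sfun hB id from by rw [sfun_id], sfun_mul,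
      show (ind' * id : ℝ → ℝ) = -fun x => max (-x) 0 from funext fun x => ?_]
    simp only [Pi.mul_apply, Pi.neg_apply, hind', id]
    rcases lt_or_ge x 0 with h | h
    · rw [if_pos h, one_mul, max_eq_left (by linarith : (0:ℝ) ≤ -x)]; ring
    · rw [if_neg (not_lt.mpr h), zero_mul, max_eq_right (by linarith : -x ≤ (0:ℝ))]; ring
  have hp : (sfun hB fun x => max x 0).trace ≤ X.trace := by
    calc (sfun hB fun x => max x 0).trace
        = (sfun hB ind * X).trace - (sfun hB ind * Y).trace := by
          rw [← hPos, show sfun hB ind * B = sfun hB ind * (X - Y) from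
            congrArg (HMul.hMul (sfun hB ind)) hBXY, Matrix.mul_sub, Matrix.trace_sub]
      _ ≤ (sfun hB ind * X).trace := sub_le_self _ (key ind hind0 hind1 hY).1
      _ ≤ X.trace := (key ind hind0 hind1 hX).2
  have hq : (sfun hB fun x => max (-x) 0).trace ≤ Y.trace := by
    calc (sfun hB fun x => max (-x) 0).trace
        = (sfun hB ind' * Y).trace - (sfun hB ind' * X).trace := by
          have h4 : sfun hB (fun x => max (-x) 0) = -(sfun hB ind' * B) := by
            rw [hNeg, neg_neg]
          rw [h4, show sfun hB ind' * B = sfun hB ind' * (X - Y) from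
            congrArg (HMul.hMul (sfun hB ind')) hBXY, Matrix.mul_sub, neg_sub, Matrix.trace_sub]
      _ ≤ (sfun hB ind' * Y).trace := sub_le_self _ (key ind' hind'0 hind'1 hX).1
      _ ≤ Y.trace := (key ind' hind'0 hind'1 hY).2
  rw [traceNorm_herm hB, Complex.add_re]
  have h1 := (Complex.le_def.mp hp).1
  have h2 := (Complex.le_def.mp hq).1
  linarith

end TDAux

open Matrix in
lemma cp_posSemidef {α β : Type*} [Fintype α] [DecidableEq α] [Fintype β] [DecidableEq β]
    (T : Matrix α α ℂ →ₗ[ℂ] Matrix β β ℂ) (hT : IsCompletelyPositive T)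
    {M : Matrix α α ℂ} (hM : M.PosSemidef) : (T M).PosSemidef := by
  let M' : Matrix (α × Fin 1) (α × Fin 1) ℂ := M.submatrix Prod.fst Prod.fst
  have h := hT 1 M' (hM.submatrix _)
  have hTM : T M = (tensorIdMap T M').submatrix (fun b : β => (b, (0 : Fin 1)))
      (fun b : β => (b, (0 : Fin 1))) := rfl
  rw [hTM]
  exact h.submatrix _
end

theorem traceDist_quantumOp_le' {α β : Type*} [Fintype α] [DecidableEq α]
    [Fintype β] [DecidableEq β]
    (T : Matrix α α ℂ →ₗ[ℂ] Matrix β β ℂ) (hT : IsQuantumOp T)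
    (ρ σ : Matrix α α ℂ) (hρ : IsDensityMatrix ρ) (hσ : IsDensityMatrix σ) :
    traceDist (T ρ) (T σ) ≤ traceDist ρ σ := by
  obtain ⟨hTtr, hTcp⟩ := hT
  have hA : (ρ - σ).IsHermitian := hρ.1.isHermitian.sub hσ.1.isHermitian
  have hP : (TDAux.sfun hA fun x => max x 0).PosSemidef :=
    TDAux.sfun_posSemidef hA _ fun x => le_max_right _ _
  have hQ : (TDAux.sfun hA fun x => max (-x) 0).PosSemidef :=
    TDAux.sfun_posSemidef hA _ fun x => le_max_right _ _
  have hPQ : ρ - σ = (TDAux.sfun hA fun x => max x 0) - (TDAux.sfun hA fun x => max (-x) 0) := by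
    rw [TDAux.sfun_sub,
      show ((fun x : ℝ => max x 0) - fun x => max (-x) 0) = (id : ℝ → ℝ) from
        funext fun x => by
          rcases le_total 0 x with h | h
          · simp [max_eq_left h, max_eq_right (neg_nonpos.mpr h)]
          · simp [max_eq_right h, max_eq_left (neg_nonneg.mpr h)],
      TDAux.sfun_id]
  have hsplit : T ρ - T σ = T (TDAux.sfun hA fun x => max x 0) -
      T (TDAux.sfun hA fun x => max (-x) 0) := by
    rw [← map_sub, show T (ρ - σ) = T ((TDAux.sfun hA fun x => max x 0) -
      (TDAux.sfun hA fun x => max (-x) 0)) from congrArg T hPQ, map_sub]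
  have hle : traceNorm (T ρ - T σ) ≤
      (T (TDAux.sfun hA fun x => max x 0)).trace.re +
      (T (TDAux.sfun hA fun x => max (-x) 0)).trace.re :=
    TDAux.traceNorm_le (cp_posSemidef T hTcp hP) (cp_posSemidef T hTcp hQ) hsplit
  rw [hTtr, hTtr] at hle
  have heq : traceNorm (ρ - σ) =
      (TDAux.sfun hA fun x => max x 0).trace.re +
      (TDAux.sfun hA fun x => max (-x) 0).trace.re := by
    rw [TDAux.traceNorm_herm hA, Complex.add_re]
  unfold traceDist
  rw [heq] at *
  linarith

/-- **Proposition `monotone`.** Quantum operations are contractive for the trace distance: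
`D(T(ρ), T(σ)) ≤ D(ρ, σ)` for density matrices `ρ, σ` and a quantum operation `T`. -/
theorem traceDist_quantumOp_le {α β : Type*} [Fintype α] [DecidableEq α]
    [Fintype β] [DecidableEq β]
    (T : Matrix α α ℂ →ₗ[ℂ] Matrix β β ℂ) (hT : IsQuantumOp T)
    (ρ σ : Matrix α α ℂ) (hρ : IsDensityMatrix ρ) (hσ : IsDensityMatrix σ) :
    traceDist (T ρ) (T σ) ≤ traceDist ρ σ :=
  traceDist_quantumOp_le' T hT ρ σ hρ hσ
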